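/- Fix an integer J ≥ 1 and reals z_1, …, z_J ∈ (0,1]. For ω ∈ {+1,−1}^n let U_j(ω) be the number of maximal blocks of consecutive +1's in ω of length exactly j, define W^{(J)}(ω) := ∏_{j=1}^J z_j^{U_j(ω)} (blocks of length greater than J contribute the factor 1), and let a_n := 2^{−n} ∑_{ω ∈ {+1,−1}^n} W^{(J)}(ω) with a_0 := 1. Let w_c(J) be the smallest positive root of φ_J(w) := 1 − (w/2)(1 + Z(w)) where Z(w) := ∑_{j=1}^J (w/2)^j z_j + (w/2)^{J+1}/(1 − w/2). Then for every real w with 0 ≤ w < w_c(J), the series ∑_{n≥0} w^n a_n converges and ∑_{n≥0} w^n a_n = (1 + Z(w)) / (1 − (w/2)(1 + Z(w))). -/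

import Mathlib

/-- The `p`-th step (`+1` or `-1`) of the sign sequence `ω`, extended by `0` outside. -/
def stepB (n : ℕ) (ω : Fin n → Bool) (p : ℕ) : ℤ :=
  if hp : p < n then (if ω ⟨p, hp⟩ then 1 else -1) else 0

/-- Number of maximal blocks of consecutive `+1`'s of length exactly `j` in `ω`. -/
def upBlocks (n : ℕ) (ω : Fin n → Bool) (j : ℕ) : ℕ :=
  ((Finset.range n).filter fun i =>
    (∀ m < j, stepB n ω (i + m) = 1) ∧ stepB n ω (i + j) ≠ 1 ∧
      (i = 0 ∨ stepB n ω (i - 1) ≠ 1)).card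

lemma stepB_eq_one {n : ℕ} {ω : Fin n → Bool} {p : ℕ} (hp : p < n) :
    stepB n ω p = 1 ↔ ω ⟨p, hp⟩ = true := by
  unfold stepB
  rw [dif_pos hp]
  cases h : ω ⟨p, hp⟩ <;> simp [h]

lemma stepB_shift {n k m : ℕ} (hm : m = n - (k + 1)) (ω : Fin n → Bool)
    (ω' : Fin m → Bool)
    (hω' : ∀ (q : ℕ) (hq : q < m), ω' ⟨q, hq⟩ = ω ⟨k + 1 + q, by omega⟩) (p : ℕ) :
    stepB n ω (k + 1 + p) = stepB m ω' p := by
  unfold stepB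
  by_cases h : p < m
  · rw [dif_pos h, dif_pos (show k + 1 + p < n by omega), hω' p h]
  · rw [dif_neg h, dif_neg (show ¬ k + 1 + p < n by omega)]

lemma upBlocks_decomp {n k m : ℕ} (hkn : k < n) (hm : m = n - (k + 1))
    (ω : Fin n → Bool) (ω' : Fin m → Bool)
    (hω' : ∀ (q : ℕ) (hq : q < m), ω' ⟨q, hq⟩ = ω ⟨k + 1 + q, by omega⟩)
    {j : ℕ}
    (hk : ∀ p < k, stepB n ω p = 1) (hk2 : stepB n ω k ≠ 1) :
    upBlocks n ω j = (if j = k then 1 else 0) + upBlocks m ω' j := by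
  have hstep : ∀ p, stepB n ω (k + 1 + p) = stepB m ω' p :=
    stepB_shift hm ω ω' hω'
  unfold upBlocks
  rw [Finset.card_filter, Finset.card_filter]
  rw [Finset.range_eq_Ico,
    ← Finset.sum_Ico_consecutive _ (Nat.zero_le (k + 1)) (by omega : k + 1 ≤ n)]
  congr 1
  · -- sum over Ico 0 (k+1): only i = 0 can contribute, and it does iff j = k
    rw [← Finset.range_eq_Ico]
    rw [Finset.sum_eq_single_of_mem 0 (Finset.mem_range.mpr (Nat.succ_pos k))]
    · by_cases hjk : j = k
      · rw [if_pos ?_, if_pos hjk]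
        refine ⟨fun p hp => by simpa using hk p (by omega), ?_, Or.inl rfl⟩
        simpa [hjk] using hk2
      · rw [if_neg ?_, if_neg hjk]
        rintro ⟨hall, hne, -⟩
        rcases lt_or_gt_of_ne hjk with h | h
        · exact hne (by simpa using hk j h)
        · exact hk2 (by simpa using hall k h)
    · intro i hi hi0
      rw [if_neg]
      rintro ⟨-, -, h0 | h3⟩
      · exact hi0 h0
      · exact h3 (hk (i - 1) (by simp only [Finset.mem_range] at hi; omega))
  · -- sum over Ico (k+1) n: shifted blocks
    rw [Finset.sum_Ico_eq_sum_range, show n - (k + 1) = m from hm.symm]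
    refine Finset.sum_congr rfl fun i _ => ?_
    have e1 : ∀ p, stepB n ω (k + 1 + i + p) = stepB m ω' (i + p) := fun p => by
      rw [add_assoc (k + 1) i p]; exact hstep (i + p)
    refine if_congr ?_ rfl rfl
    refine and_congr (forall₂_congr fun p _ => by rw [e1]) (and_congr (by rw [e1]) ?_)
    constructor
    · rintro (h0 | h3)
      · omega
      · rcases Nat.eq_zero_or_pos i with rfl | hpos
        · exact Or.inl rfl
        · refine Or.inr ?_
          rwa [show k + 1 + i - 1 = k + 1 + (i - 1) by omega, hstep] at h3
    · intro _
      refine Or.inr ?_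
      rcases Nat.eq_zero_or_pos i with rfl | hpos
      · rwa [show k + 1 + 0 - 1 = k by omega]
      · rw [show k + 1 + i - 1 = k + 1 + (i - 1) by omega, hstep]
        rcases ‹i = 0 ∨ stepB m ω' (i - 1) ≠ 1› with h0 | h3
        · omega
        · exact h3


lemma upBlocks_alltrue (n : ℕ) {j : ℕ} (hj : 1 ≤ j) :
    upBlocks n (fun _ => true) j = if j = n then 1 else 0 := by
  have hs : ∀ p, stepB n (fun _ => true) p = 1 ↔ p < n := by
    intro p
    unfold stepB
    by_cases h : p < n
    · simp [h]
    · simp [h]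
  unfold upBlocks
  rw [Finset.card_filter]
  rcases Nat.eq_zero_or_pos n with rfl | hn
  · simp [if_neg (by omega : ¬ j = 0)]
  rw [Finset.sum_eq_single_of_mem 0 (Finset.mem_range.mpr hn)]
  · by_cases hjn : j = n
    · rw [if_pos ?_, if_pos hjn]
      refine ⟨fun p hp => (hs _).mpr (by omega), ?_, Or.inl rfl⟩
      rw [Ne, hs]; omega
    · rw [if_neg ?_, if_neg hjn]
      rintro ⟨hall, hne, -⟩
      rcases lt_or_gt_of_ne hjn with h | h
      · exact hne ((hs _).mpr (by omega))
      · have := (hs (0 + (n))).mp (hall n (by omega))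
        omega
  · intro i hi hi0
    rw [if_neg]
    rintro ⟨-, -, h0 | h3⟩
    · exact hi0 h0
    · exact h3 ((hs _).mpr (by simp only [Finset.mem_range] at hi; omega))

noncomputable def zetaW (J : ℕ) (z : ℕ → ℝ) (k : ℕ) : ℝ :=
  if k ∈ Finset.Icc 1 J then z k else 1

noncomputable def bS (J : ℕ) (z : ℕ → ℝ) (n : ℕ) : ℝ :=
  ∑ ω : Fin n → Bool, ∏ j ∈ Finset.Icc 1 J, z j ^ upBlocks n ω j

lemma prod_pow_ite (J : ℕ) (z : ℕ → ℝ) (k : ℕ) :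
    ∏ j ∈ Finset.Icc 1 J, z j ^ (if j = k then 1 else 0) = zetaW J z k := by
  rw [zetaW, ← Finset.prod_ite_eq' (Finset.Icc 1 J) k z]
  refine Finset.prod_congr rfl fun j _ => ?_
  split_ifs <;> simp

lemma weight_decomp (J : ℕ) (z : ℕ → ℝ) {n k m : ℕ} (hkn : k < n) (hm : m = n - (k + 1))
    (ω : Fin n → Bool) (ω' : Fin m → Bool)
    (hω' : ∀ (q : ℕ) (hq : q < m), ω' ⟨q, hq⟩ = ω ⟨k + 1 + q, by omega⟩)
    (hk : ∀ p < k, stepB n ω p = 1) (hk2 : stepB n ω k ≠ 1) :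
    ∏ j ∈ Finset.Icc 1 J, z j ^ upBlocks n ω j
      = zetaW J z k * ∏ j ∈ Finset.Icc 1 J, z j ^ upBlocks m ω' j := by
  rw [← prod_pow_ite J z k, ← Finset.prod_mul_distrib]
  refine Finset.prod_congr rfl fun j _ => ?_
  rw [upBlocks_decomp hkn hm ω ω' hω' hk hk2, pow_add]

noncomputable def firstNonUp (n : ℕ) (ω : Fin n → Bool) : ℕ :=
  Nat.find (p := fun p => stepB n ω p ≠ 1) ⟨n, by simp [stepB]⟩

lemma firstNonUp_le (n : ℕ) (ω : Fin n → Bool) : firstNonUp n ω ≤ n :=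
  Nat.find_le (by simp [stepB])

lemma firstNonUp_spec (n : ℕ) (ω : Fin n → Bool) : stepB n ω (firstNonUp n ω) ≠ 1 :=
  Nat.find_spec (p := fun p => stepB n ω p ≠ 1) ⟨n, by simp [stepB]⟩

lemma firstNonUp_min (n : ℕ) (ω : Fin n → Bool) {p : ℕ} (hp : p < firstNonUp n ω) :
    stepB n ω p = 1 :=
  not_not.mp (Nat.find_min (p := fun p => stepB n ω p ≠ 1) ⟨n, by simp [stepB]⟩ hp)

lemma bS_rec (J : ℕ) (z : ℕ → ℝ) (n : ℕ) :
    bS J z (n + 1) = zetaW J z (n + 1)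
      + ∑ k ∈ Finset.range (n + 1), zetaW J z k * bS J z (n - k) := by
  classical
  have key : bS J z (n + 1) = ∑ k ∈ Finset.range (n + 2),
      ∑ ω ∈ Finset.univ.filter fun ω : Fin (n + 1) → Bool => firstNonUp (n + 1) ω = k,
        ∏ j ∈ Finset.Icc 1 J, z j ^ upBlocks (n + 1) ω j := by
    rw [bS]
    exact (Finset.sum_fiberwise_of_maps_to
      (fun ω _ => Finset.mem_range.mpr (by have := firstNonUp_le (n + 1) ω; omega)) _).symm
  rw [key, Finset.sum_range_succ, add_comm]
  congr 1
  · -- all-true fiber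
    have hfib : (Finset.univ.filter fun ω : Fin (n + 1) → Bool => firstNonUp (n + 1) ω = n + 1)
        = {fun _ => true} := by
      ext ω
      simp only [Finset.mem_filter, Finset.mem_univ, true_and, Finset.mem_singleton]
      constructor
      · intro h
        funext i
        have h1 : stepB (n + 1) ω i.val = 1 :=
          firstNonUp_min _ _ (by rw [h]; exact i.isLt)
        exact (stepB_eq_one i.isLt).mp h1
      · rintro rfl
        rw [firstNonUp, Nat.find_eq_iff]
        refine ⟨by simp [stepB], fun p hp => ?_⟩
        simp only [not_not]
        exact (stepB_eq_one hp).mpr rfl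
    rw [hfib, Finset.sum_singleton,
      Finset.prod_congr rfl (fun j hj => by
        rw [upBlocks_alltrue (n + 1) (Finset.mem_Icc.mp hj).1]),
      prod_pow_ite]
  · refine Finset.sum_congr rfl fun k hk => ?_
    have hkN : k < n + 1 := Finset.mem_range.mp hk
    rw [bS, Finset.mul_sum]
    refine Finset.sum_nbij'
      (fun (ω : Fin (n + 1) → Bool) (q : Fin (n - k)) => ω ⟨k + 1 + q.val, by omega⟩)
      (fun (ω' : Fin (n - k) → Bool) (i : Fin (n + 1)) =>
        if h1 : i.val < k then true else if h2 : i.val = k then false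
        else ω' ⟨i.val - (k + 1), by omega⟩)
      (fun ω _ => Finset.mem_univ _) ?_ ?_ ?_ ?_
    · -- extend lands in the fiber
      intro ω' _
      simp only [Finset.mem_filter, Finset.mem_univ, true_and]
      rw [firstNonUp, Nat.find_eq_iff]
      constructor
      · rw [Ne, stepB_eq_one hkN]
        simp only [dif_neg (lt_irrefl k), dif_pos rfl]
        exact Bool.false_ne_true
      · intro p hp
        simp only [not_not]
        rw [stepB_eq_one (by omega : p < n + 1)]
        simp only [dif_pos hp]
    · -- left inverse
      intro ω hω
      simp only [Finset.mem_filter, Finset.mem_univ, true_and] at hω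
      funext i
      by_cases h1 : i.val < k
      · simp only [dif_pos h1]
        have h2 : stepB (n + 1) ω i.val = 1 := firstNonUp_min _ _ (by omega)
        exact ((stepB_eq_one i.isLt).mp h2).symm
      · by_cases h2 : i.val = k
        · simp only [dif_neg h1, dif_pos h2]
          have h3 : stepB (n + 1) ω k ≠ 1 := hω ▸ firstNonUp_spec (n + 1) ω
          rw [Ne, stepB_eq_one hkN] at h3
          have h4 : ω ⟨k, hkN⟩ = false := by
            cases hb : ω ⟨k, hkN⟩
            · rfl
            · exact absurd hb h3
          have : i = ⟨k, hkN⟩ := Fin.ext h2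
          rw [this, h4]
        · simp only [dif_neg h1, dif_neg h2]
          congr 1
          exact Fin.ext (by simp; omega)
    · -- right inverse
      intro ω' _
      funext q
      have h1 : ¬ (k + 1 + q.val < k) := by omega
      have h2 : ¬ (k + 1 + q.val = k) := by omega
      simp only [dif_neg h1, dif_neg h2]
      congr 1
      exact Fin.ext (by simp)
    · -- weights decompose
      intro ω hω
      simp only [Finset.mem_filter, Finset.mem_univ, true_and] at hω
      exact weight_decomp J z hkN (by omega) ω _ (fun q hq => rfl)
        (fun p hp => firstNonUp_min _ _ (by omega))
        (hω ▸ firstNonUp_spec (n + 1) ω)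

noncomputable def cseq (J : ℕ) (z : ℕ → ℝ) (x : ℝ) (n : ℕ) : ℝ := x ^ n * zetaW J z n
noncomputable def tseq (J : ℕ) (z : ℕ → ℝ) (x : ℝ) (n : ℕ) : ℝ := x ^ n * bS J z n

lemma upBlocks_zero (ω : Fin 0 → Bool) (j : ℕ) : upBlocks 0 ω j = 0 := by
  simp [upBlocks]

lemma bS_zero (J : ℕ) (z : ℕ → ℝ) : bS J z 0 = 1 := by
  rw [bS]
  rw [Finset.sum_congr rfl (fun ω _ => Finset.prod_congr rfl fun j _ => by
    rw [upBlocks_zero, pow_zero])]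
  simp

lemma tseq_rec (J : ℕ) (z : ℕ → ℝ) (x : ℝ) (n : ℕ) :
    tseq J z x (n + 1) = cseq J z x (n + 1)
      + x * ∑ k ∈ Finset.range (n + 1), cseq J z x k * tseq J z x (n - k) := by
  rw [tseq, cseq, bS_rec J z n, mul_add, Finset.mul_sum, Finset.mul_sum]
  congr 1
  refine Finset.sum_congr rfl fun k hk => ?_
  have hkn : k ≤ n := Nat.lt_succ_iff.mp (Finset.mem_range.mp hk)
  rw [cseq, tseq]
  rw [show n + 1 = k + (n - k) + 1 by omega, pow_add, pow_add, pow_one]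
  ring

/-- The generating function of the simple-random-walk expectations of the up-run
weights: for `0 ≤ w < w_c(J)` the series converges to `(1+Z(w))/(1-(w/2)(1+Z(w)))`. -/
theorem generating_function_of_weighted_srw (J : ℕ) (hJ : 1 ≤ J) (z : ℕ → ℝ)
    (hz : ∀ j ∈ Finset.Icc 1 J, 0 < z j ∧ z j ≤ 1)
    (a : ℕ → ℝ)
    (ha : ∀ n, a n = (2 : ℝ) ^ (-(n : ℤ)) *
      ∑ ω : Fin n → Bool, ∏ j ∈ Finset.Icc 1 J, z j ^ upBlocks n ω j)
    (Z : ℝ → ℝ)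
    (hZ : ∀ w, Z w = ∑ j ∈ Finset.Icc 1 J, (w / 2) ^ j * z j
      + (w / 2) ^ (J + 1) / (1 - w / 2))
    (wc : ℝ)
    (hwc : IsLeast {w : ℝ | 0 < w ∧ 1 - w / 2 * (1 + Z w) = 0} wc) :
    ∀ w : ℝ, 0 ≤ w → w < wc →
      HasSum (fun n : ℕ => w ^ n * a n) ((1 + Z w) / (1 - w / 2 * (1 + Z w))) := by
  have hznn : ∀ j ∈ Finset.Icc 1 J, 0 ≤ z j := fun j hj => (hz j hj).1.le
  have hzeta_nonneg : ∀ k, 0 ≤ zetaW J z k := fun k => by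
    rw [zetaW]; split_ifs with h
    · exact (hz k h).1.le
    · norm_num
  have hbS_nonneg : ∀ n, 0 ≤ bS J z n := fun n =>
    Finset.sum_nonneg fun ω _ => Finset.prod_nonneg fun j hj => pow_nonneg (hznn j hj) _
  have hZ0 : Z 0 = 0 := by
    rw [hZ 0]
    rw [Finset.sum_eq_zero fun j hj => by
      rw [zero_div, zero_pow (by have := (Finset.mem_Icc.mp hj).1; omega), zero_mul]]
    norm_num
  -- ε and w₁
  set ε : ℝ := (1 / 2) ^ (J + 3) with hε
  have hεpos : 0 < ε := by positivity
  have hεle : ε ≤ 1 / 16 := by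
    calc ε ≤ (1 / 2 : ℝ) ^ 4 :=
          pow_le_pow_of_le_one (by norm_num) (by norm_num) (by omega)
      _ = 1 / 16 := by norm_num
  set w₁ : ℝ := 2 - 2 * ε with hw₁
  have hw₁pos : (0 : ℝ) ≤ w₁ := by rw [hw₁]; linarith
  have hw₁lt2 : w₁ < 2 := by rw [hw₁]; linarith
  -- continuity of φ on [0, w₁]
  have hcont : ContinuousOn (fun v => 1 - v / 2 * (1 + Z v)) (Set.Icc 0 w₁) := by
    have hden : ∀ v ∈ Set.Icc (0 : ℝ) w₁, 1 - v / 2 ≠ 0 := by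
      intro v hv
      have h1 : v ≤ w₁ := hv.2
      have : ε ≤ 1 - v / 2 := by rw [hw₁] at h1; linarith
      linarith
    have hg : ContinuousOn (fun v => 1 - v / 2 * (1 + (∑ j ∈ Finset.Icc 1 J, (v / 2) ^ j * z j
        + (v / 2) ^ (J + 1) / (1 - v / 2)))) (Set.Icc 0 w₁) := by
      have h1 : ContinuousOn (fun v : ℝ => (v / 2) ^ (J + 1) / (1 - v / 2)) (Set.Icc 0 w₁) :=
        ContinuousOn.div (by fun_prop) (by fun_prop) hden
      have h2 : Continuous (fun v : ℝ => ∑ j ∈ Finset.Icc 1 J, (v / 2) ^ j * z j) :=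
        continuous_finset_sum _ fun j _ => by fun_prop
      exact continuousOn_const.sub
        (((continuous_id.div_const 2).continuousOn).mul
          (continuousOn_const.add (h2.continuousOn.add h1)))
    exact hg.congr fun v _ => by show 1 - v / 2 * (1 + Z v) = _; rw [hZ v]
  -- φ w₁ < 0
  have hφw₁ : 1 - w₁ / 2 * (1 + Z w₁) < 0 := by
    have hhalf : w₁ / 2 = 1 - ε := by rw [hw₁]; ring
    have hden : 1 - w₁ / 2 = ε := by rw [hw₁]; ring
    -- Bernoulli lower bound on (w₁/2)^(J+2)
    have hkey : (2 : ℝ) ^ (J + 2) * ε = 1 / 2 := by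
      rw [hε]
      rw [show ((1:ℝ)/2)^(J+3) = (1/2)^(J+2) * (1/2) from pow_succ _ _,
        ← mul_assoc, ← mul_pow]
      norm_num
    have hJ2 : ((J : ℝ) + 2) * ε ≤ 1 / 2 := by
      have hcast : ((J : ℝ) + 2) ≤ 2 ^ (J + 2) := by
        exact_mod_cast (Nat.lt_two_pow_self (n := J + 2)).le
      calc ((J : ℝ) + 2) * ε ≤ 2 ^ (J + 2) * ε :=
            mul_le_mul_of_nonneg_right hcast hεpos.le
        _ = 1 / 2 := hkey
    have hpow_lb : (1 / 2 : ℝ) ≤ (w₁ / 2) ^ (J + 2) := by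
      have hb := one_add_mul_le_pow (a := -ε) (by linarith) (J + 2)
      rw [show (1 : ℝ) + -ε = 1 - ε by ring] at hb
      rw [hhalf]
      push_cast at hb
      linarith
    -- Z w₁ dominates the tail term
    have hZlb : (w₁ / 2) ^ (J + 1) / ε ≤ Z w₁ := by
      rw [hZ w₁, hden]
      have hnn : 0 ≤ ∑ j ∈ Finset.Icc 1 J, (w₁ / 2) ^ j * z j :=
        Finset.sum_nonneg fun j hj =>
          mul_nonneg (pow_nonneg (by linarith) _) (hznn j hj)
      linarith
    have hhalfnn : (0 : ℝ) ≤ w₁ / 2 := by linarith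
    have h3 : 1 - w₁ / 2 * (1 + Z w₁) ≤ 1 - w₁ / 2 * ((w₁ / 2) ^ (J + 1) / ε + 1) := by
      nlinarith [mul_le_mul_of_nonneg_left (by linarith [hZlb] : (w₁ / 2) ^ (J + 1) / ε + 1 ≤ 1 + Z w₁) hhalfnn]
    have h4 : w₁ / 2 * ((w₁ / 2) ^ (J + 1) / ε + 1) = (w₁ / 2) ^ (J + 2) / ε + w₁ / 2 := by
      rw [pow_succ]
      ring
    have h5 : (8 : ℝ) ≤ (w₁ / 2) ^ (J + 2) / ε := by
      rw [le_div_iff₀ hεpos]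
      nlinarith [hpow_lb, hεle, hεpos]
    rw [h4] at h3
    linarith
  -- root in [0, w₁]
  have hroot : ∃ r ∈ Set.Icc (0 : ℝ) w₁, 1 - r / 2 * (1 + Z r) = 0 := by
    have h0mem : (0 : ℝ) ∈ Set.Icc (1 - w₁ / 2 * (1 + Z w₁))
        ((fun v => 1 - v / 2 * (1 + Z v)) 0) := by
      constructor
      · exact hφw₁.le
      · simp [hZ0]
    obtain ⟨r, hr, hr0⟩ := intermediate_value_Icc' hw₁pos hcont h0mem
    exact ⟨r, hr, hr0⟩
  obtain ⟨r, hrmem, hr0⟩ := hroot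
  have hrpos : 0 < r := by
    rcases hrmem.1.lt_or_eq with h | h
    · exact h
    · exfalso; rw [← h] at hr0; simp [hZ0] at hr0
  have hwc2 : wc ≤ w₁ := (hwc.2 ⟨hrpos, hr0⟩).trans hrmem.2
  -- now take w
  intro w hw0 hwlt
  have hw2 : w < 2 := lt_of_lt_of_le hwlt (hwc2.trans hw₁lt2.le)
  -- positivity of the denominator
  have hφw : 0 < 1 - w / 2 * (1 + Z w) := by
    rcases lt_trichotomy (1 - w / 2 * (1 + Z w)) 0 with hneg | h0 | hpos
    · exfalso
      have hsub : Set.Icc (0 : ℝ) w ⊆ Set.Icc 0 w₁ :=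
        Set.Icc_subset_Icc le_rfl (by linarith)
      have h0mem : (0 : ℝ) ∈ Set.Icc ((fun v => 1 - v / 2 * (1 + Z v)) w)
          ((fun v => 1 - v / 2 * (1 + Z v)) 0) := by
        constructor
        · exact hneg.le
        · simp [hZ0]
      obtain ⟨r', hr'mem, hr'0⟩ := intermediate_value_Icc' hw0 (hcont.mono hsub) h0mem
      have hr'pos : 0 < r' := by
        rcases hr'mem.1.lt_or_eq with h | h
        · exact h
        · exfalso; rw [← h] at hr'0; simp [hZ0] at hr'0
      have := hwc.2 ⟨hr'pos, hr'0⟩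
      have := hr'mem.2
      linarith
    · exfalso
      have hwpos : 0 < w := by
        rcases hw0.lt_or_eq with h | h
        · exact h
        · exfalso; rw [← h] at h0; simp [hZ0] at h0
      have := hwc.2 ⟨hwpos, h0⟩
      linarith
    · exact hpos
  -- series setup
  set x : ℝ := w / 2 with hx
  set G : ℝ := 1 + Z w with hG
  have hx0 : 0 ≤ x := by rw [hx]; linarith
  have hx1 : x < 1 := by rw [hx]; linarith
  have hpos : 0 < 1 - x * G := hφw
  have hc_nonneg : ∀ n, 0 ≤ cseq J z x n := fun n =>
    mul_nonneg (pow_nonneg hx0 n) (hzeta_nonneg n)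
  have ht_nonneg : ∀ n, 0 ≤ tseq J z x n := fun n =>
    mul_nonneg (pow_nonneg hx0 n) (hbS_nonneg n)
  have hc0 : cseq J z x 0 = 1 := by
    rw [cseq, pow_zero, one_mul, zetaW, if_neg (by simp)]
  have ht0 : tseq J z x 0 = 1 := by
    rw [tseq, pow_zero, one_mul, bS_zero]
  -- HasSum of c
  have hc : HasSum (cseq J z x) G := by
    have htail : (fun n : ℕ => cseq J z x (n + (J + 1))) = fun n => x ^ (J + 1) * x ^ n := by
      funext n
      have hnot : n + (J + 1) ∉ Finset.Icc 1 J := by simp; omega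
      rw [cseq, zetaW, if_neg hnot, mul_one, pow_add]
      ring
    have hgeom : HasSum (fun n : ℕ => x ^ (J + 1) * x ^ n) (x ^ (J + 1) * (1 - x)⁻¹) :=
      (hasSum_geometric_of_lt_one hx0 hx1).mul_left _
    have hsum : ∑ i ∈ Finset.range (J + 1), cseq J z x i
        = 1 + ∑ j ∈ Finset.Icc 1 J, x ^ j * z j := by
      rw [Finset.sum_range_succ', hc0, add_comm]
      congr 1
      rw [← Finset.Ico_add_one_right_eq_Icc, Finset.sum_Ico_eq_sum_range]
      refine Finset.sum_congr rfl fun i hi => ?_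
      have hiJ : i < J := Finset.mem_range.mp hi
      rw [cseq, zetaW, if_pos (by simp; omega), show 1 + i = i + 1 by omega]
    have h1 : HasSum (fun n : ℕ => cseq J z x (n + (J + 1)))
        (G - ∑ i ∈ Finset.range (J + 1), cseq J z x i) := by
      rw [htail, hsum, hG, hZ w, ← hx]
      convert hgeom using 1
      rw [div_eq_mul_inv]
      ring
    exact (hasSum_nat_add_iff' (J + 1)).mp h1
  have hcsum_le : ∀ N, ∑ i ∈ Finset.range N, cseq J z x i ≤ G := fun N =>
    sum_le_hasSum (Finset.range N) (fun i _ => hc_nonneg i) hc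
  have hGnn : 0 ≤ G := le_trans (by norm_num : (0:ℝ) ≤ 1)
    (by simpa [hc0] using sum_le_hasSum (Finset.range 1) (fun i _ => hc_nonneg i) hc)
  -- partial sums of t are bounded
  set L : ℝ := G / (1 - x * G) with hL
  have hLnn : 0 ≤ L := div_nonneg hGnn hpos.le
  have hbound : ∀ N, ∑ n ∈ Finset.range N, tseq J z x n ≤ L := by
    intro N
    rcases N with _ | M
    · simpa using hLnn
    set T := ∑ n ∈ Finset.range (M + 1), tseq J z x n with hT
    have hTnn : 0 ≤ T := Finset.sum_nonneg fun n _ => ht_nonneg n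
    have key : T ≤ G + x * (G * T) := by
      have step1 : ∑ i ∈ Finset.range M, tseq J z x (i + 1)
          = ∑ i ∈ Finset.range M, cseq J z x (i + 1)
            + x * ∑ i ∈ Finset.range M, ∑ k ∈ Finset.range (i + 1),
                cseq J z x k * tseq J z x (i - k) := by
        rw [Finset.mul_sum, ← Finset.sum_add_distrib]
        exact Finset.sum_congr rfl fun i _ => tseq_rec J z x i
      have h2 : ∑ i ∈ Finset.range M, cseq J z x (i + 1) ≤ G - 1 := by
        have h := hcsum_le (M + 1)
        rw [Finset.sum_range_succ', hc0] at h
        linarith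
      have h3 : ∑ i ∈ Finset.range M, ∑ k ∈ Finset.range (i + 1),
          cseq J z x k * tseq J z x (i - k) ≤ G * T := by
        rw [Finset.sum_range_diag_flip M (fun k l => cseq J z x k * tseq J z x l)]
        have hinner : ∀ m ∈ Finset.range M,
            ∑ k ∈ Finset.range (M - m), cseq J z x m * tseq J z x k
              ≤ cseq J z x m * T := by
          intro m _
          rw [← Finset.mul_sum]
          refine mul_le_mul_of_nonneg_left ?_ (hc_nonneg m)
          exact Finset.sum_le_sum_of_subset_of_nonneg
            (Finset.range_subset_range.mpr (by omega)) (fun i _ _ => ht_nonneg i)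
        calc ∑ m ∈ Finset.range M, ∑ k ∈ Finset.range (M - m),
              cseq J z x m * tseq J z x k
            ≤ ∑ m ∈ Finset.range M, cseq J z x m * T := Finset.sum_le_sum hinner
          _ = (∑ m ∈ Finset.range M, cseq J z x m) * T := by rw [Finset.sum_mul]
          _ ≤ G * T := mul_le_mul_of_nonneg_right (hcsum_le M) hTnn
      have h4 : x * ∑ i ∈ Finset.range M, ∑ k ∈ Finset.range (i + 1),
          cseq J z x k * tseq J z x (i - k) ≤ x * (G * T) :=
        mul_le_mul_of_nonneg_left h3 hx0
      have hexp := Finset.sum_range_succ' (tseq J z x) M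
      rw [ht0, step1] at hexp
      linarith [hexp, hT, h2, h4]
    rw [hL, le_div_iff₀ hpos]
    nlinarith [key]
  have hts : Summable (tseq J z x) := summable_of_sum_range_le ht_nonneg hbound
  set T := ∑' n, tseq J z x n with hTdef
  have hT : HasSum (tseq J z x) T := hts.hasSum
  have hcnorm : Summable fun n => ‖cseq J z x n‖ := by
    have : (fun n => ‖cseq J z x n‖) = cseq J z x :=
      funext fun n => Real.norm_of_nonneg (hc_nonneg n)
    rw [this]; exact hc.summable
  have htnorm : Summable fun n => ‖tseq J z x n‖ := by
    have : (fun n => ‖tseq J z x n‖) = tseq J z x :=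
      funext fun n => Real.norm_of_nonneg (ht_nonneg n)
    rw [this]; exact hts
  have hu : HasSum (fun n => ∑ k ∈ Finset.range (n + 1),
      cseq J z x k * tseq J z x (n - k)) (G * T) := by
    have h := hasSum_sum_range_mul_of_summable_norm hcnorm htnorm
    rwa [hc.tsum_eq, ← hTdef] at h
  have hshift_t : HasSum (fun n => tseq J z x (n + 1)) (T - 1) := by
    have h := (hasSum_nat_add_iff' 1).mpr hT
    simpa [ht0] using h
  have hshift_c : HasSum (fun n => cseq J z x (n + 1)) (G - 1) := by
    have h := (hasSum_nat_add_iff' 1).mpr hc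
    simpa [hc0] using h
  have hcomb : HasSum (fun n => tseq J z x (n + 1)) (G - 1 + x * (G * T)) := by
    have h := hshift_c.add (hu.mul_left x)
    have hfun2 : (fun n => cseq J z x (n + 1) + x * ∑ k ∈ Finset.range (n + 1),
        cseq J z x k * tseq J z x (n - k)) = fun n => tseq J z x (n + 1) :=
      funext fun n => (tseq_rec J z x n).symm
    rwa [hfun2] at h
  have hTeq : T - 1 = G - 1 + x * (G * T) := hshift_t.unique hcomb
  have hTval : T = G / (1 - x * G) := by
    rw [eq_div_iff hpos.ne']
    linear_combination hTeq
  have hfun : (fun n : ℕ => w ^ n * a n) = tseq J z x := by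
    funext n
    rw [ha n]
    show w ^ n * ((2:ℝ) ^ (-(n:ℤ)) * bS J z n) = x ^ n * bS J z n
    rw [zpow_neg, zpow_natCast, hx, div_pow]
    ring
  rw [hfun]
  show HasSum (tseq J z x) (G / (1 - x * G))
  rw [← hTval]
  exact hT
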